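/- Let p be a prime and α = 2k − 1 with k ≥ 1 an integer, with (p, k) ≠ (2, 1), and let A be the adjacency matrix of the group-annihilator graph Γ(ℤ/p^αℤ). Then the eigenvalue 0 of A has multiplicity p^α − p^{k−1} − k, and the eigenvalue −1 of A has multiplicity p^{k−1} − k. -/

import Mathlib

/-- The `a`-annihilator `[a : G] = {x ∈ ℤ : xg ∈ ℤa for all g ∈ G}` of a finite abelian
group `G` viewed as a `ℤ`-module. -/
def annSet {G : Type*} [AddCommGroup G] (a : G) : Set ℤ :=
  {x : ℤ | ∀ g : G, ∃ n : ℤ, x • g = n • a}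

/-- The group-annihilator graph `Γ(G)`: two distinct vertices `a, b` are adjacent iff
`[a : G][b : G]G = {0}`. -/
def annGraph (G : Type*) [AddCommGroup G] : SimpleGraph G where
  Adj a b := a ≠ b ∧ ∀ x ∈ annSet a, ∀ y ∈ annSet b, ∀ g : G, (x * y) • g = 0
  symm := by
    constructor
    rintro a b ⟨hne, h⟩
    refine ⟨hne.symm, fun y hy x hx g => ?_⟩
    rw [mul_comm]
    exact h x hx y hy g
  loopless := by constructor; rintro a ⟨h, -⟩; exact h rfl

/-- The `p^i`-th orbit `O_{α,p^i} = {p^i b mod p^α : b ∈ ℤ, gcd(b,p) = 1}` of `ℤ/p^αℤ`. -/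
def porbit (p α i : ℕ) : Set (ZMod (p ^ α)) :=
  {x : ZMod (p ^ α) | ∃ b : ℤ, Int.gcd b p = 1 ∧ x = (((p : ℤ) ^ i * b : ℤ) : ZMod (p ^ α))}

/-- The adjacency matrix (over `ℝ`) of the group-annihilator graph `Γ(G)`. -/
noncomputable def annAdjMatrix (G : Type*) [AddCommGroup G] [Fintype G] [DecidableEq G] :
    Matrix G G ℝ :=
  letI := Classical.decRel (annGraph G).Adj
  (annGraph G).adjMatrix ℝ

set_option linter.unusedSectionVars false

/-! ### Characterization of the annihilator graph of `ZMod n` -/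

lemma mem_annSet_iff {n : ℕ} [NeZero n] (a : ZMod n) (x : ℤ) :
    x ∈ annSet a ↔ ∃ c : ZMod n, (x : ZMod n) = c * a := by
  constructor
  · intro h
    obtain ⟨m, hm⟩ := h 1
    exact ⟨(m : ZMod n), by simpa [zsmul_eq_mul] using hm⟩
  · rintro ⟨c, hc⟩ g
    refine ⟨(c * g).val, ?_⟩
    have : ((c*g).val : ℤ) • a = ((c*g) * a) := by
      simp [zsmul_eq_mul, ZMod.natCast_val, ZMod.cast_id]
    rw [this, zsmul_eq_mul, hc]
    ring

lemma annGraph_adj_iff {n : ℕ} [NeZero n] (a b : ZMod n) :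
    (annGraph (ZMod n)).Adj a b ↔ a ≠ b ∧ a * b = 0 := by
  constructor
  · rintro ⟨hne, h⟩
    refine ⟨hne, ?_⟩
    have ha : ((a.val : ℤ)) ∈ annSet a := by
      rw [mem_annSet_iff]; exact ⟨1, by simp [ZMod.natCast_val, ZMod.cast_id]⟩
    have hb : ((b.val : ℤ)) ∈ annSet b := by
      rw [mem_annSet_iff]; exact ⟨1, by simp [ZMod.natCast_val, ZMod.cast_id]⟩
    have := h _ ha _ hb 1
    rw [zsmul_eq_mul] at this
    push_cast at this
    simpa [ZMod.natCast_val, ZMod.cast_id] using this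
  · rintro ⟨hne, h⟩
    refine ⟨hne, ?_⟩
    intro x hx y hy g
    rw [mem_annSet_iff] at hx hy
    obtain ⟨c, hc⟩ := hx
    obtain ⟨d, hd⟩ := hy
    rw [zsmul_eq_mul]
    push_cast
    rw [hc, hd]
    calc c * a * (d * b) * g = (c * d * g) * (a * b) := by ring
    _ = 0 := by rw [h, mul_zero]

/-! ### The `p`-adic valuation on `ZMod (p ^ α)` -/

section Val
variable (p α : ℕ) [Fact p.Prime] [NeZero (p ^ α)]

/-- The `p`-adic valuation of an element of `ZMod (p ^ α)`, with `pval 0 = α`. -/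
def pval (a : ZMod (p ^ α)) : ℕ := if a = 0 then α else (a.val).factorization p

variable {p α}

lemma pval_zero : pval p α 0 = α := if_pos rfl

lemma pval_le (a : ZMod (p ^ α)) : pval p α a ≤ α := by
  unfold pval
  split
  · exact le_rfl
  · rename_i h
    have hv : a.val ≠ 0 := fun hh => h (by rwa [ZMod.val_eq_zero] at hh)
    by_contra hlt
    push_neg at hlt
    have hp : p.Prime := Fact.out
    have : p ^ α ∣ a.val := by
      rw [hp.pow_dvd_iff_le_factorization hv]
      omega
    exact absurd (Nat.le_of_dvd (Nat.pos_of_ne_zero hv) this) (not_le.mpr a.val_lt)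

lemma le_pval_iff {m : ℕ} (hm : m ≤ α) (a : ZMod (p ^ α)) :
    m ≤ pval p α a ↔ p ^ m ∣ a.val := by
  unfold pval
  split
  · rename_i h
    subst h
    simp [ZMod.val_zero, hm]
  · rename_i h
    have hv : a.val ≠ 0 := fun hh => h (by rwa [ZMod.val_eq_zero] at hh)
    have hp : p.Prime := Fact.out
    rw [hp.pow_dvd_iff_le_factorization hv]

lemma pval_natCast_pow {i : ℕ} (hi : i ≤ α) : pval p α ((p ^ i : ℕ) : ZMod (p ^ α)) = i := by
  have hp : p.Prime := Fact.out
  rcases eq_or_lt_of_le hi with heq | hlt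
  · subst heq
    have : ((p ^ i : ℕ) : ZMod (p ^ i)) = 0 := by
      simp [ZMod.natCast_eq_zero_iff]
    rw [this, pval_zero]
  · have hval : (((p ^ i : ℕ) : ZMod (p ^ α))).val = p ^ i :=
      ZMod.val_cast_of_lt (Nat.pow_lt_pow_right hp.one_lt hlt)
    have hne : ((p ^ i : ℕ) : ZMod (p ^ α)) ≠ 0 := by
      intro hh
      rw [← ZMod.val_eq_zero, hval] at hh
      exact (pow_ne_zero i hp.ne_zero) hh
    rw [pval, if_neg hne, hval, hp.factorization_pow, Finsupp.single_eq_same]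

lemma mul_eq_zero_iff_pval (a b : ZMod (p ^ α)) :
    a * b = 0 ↔ α ≤ pval p α a + pval p α b := by
  have hp : p.Prime := Fact.out
  rcases eq_or_ne a 0 with rfl | ha
  · simp only [zero_mul, pval_zero, true_iff]
    exact le_add_right le_rfl
  rcases eq_or_ne b 0 with rfl | hb
  · simp only [mul_zero, pval_zero, true_iff]
    exact le_add_left le_rfl
  have hva : a.val ≠ 0 := fun hh => ha (by rwa [ZMod.val_eq_zero] at hh)
  have hvb : b.val ≠ 0 := fun hh => hb (by rwa [ZMod.val_eq_zero] at hh)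
  have h1 : a * b = 0 ↔ p ^ α ∣ a.val * b.val := by
    rw [← ZMod.natCast_eq_zero_iff]
    push_cast
    simp [ZMod.natCast_val, ZMod.cast_id]
  rw [h1, hp.pow_dvd_iff_le_factorization (Nat.mul_ne_zero hva hvb),
    Nat.factorization_mul hva hvb]
  simp [pval, if_neg ha, if_neg hb]

open Finset in
lemma card_le_pval {m : ℕ} (hm : m ≤ α) :
    (univ.filter (fun a : ZMod (p ^ α) => m ≤ pval p α a)).card = p ^ (α - m) := by
  have hp : p.Prime := Fact.out
  have hppos : 0 < p ^ m := Nat.pow_pos hp.pos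
  rw [← Finset.card_range (p ^ (α - m))]
  apply Finset.card_nbij' (i := fun a : ZMod (p ^ α) => a.val / p ^ m)
      (j := fun t : ℕ => ((t * p ^ m : ℕ) : ZMod (p ^ α)))
  · intro a ha
    simp only [Finset.mem_coe, mem_filter, mem_univ, true_and] at ha
    rw [le_pval_iff hm] at ha
    simp only [Finset.mem_coe, Finset.mem_range]
    obtain ⟨q, hq⟩ := ha
    have : a.val < p ^ α := a.val_lt
    rw [hq, Nat.mul_div_cancel_left q hppos]
    rw [hq, ← Nat.sub_add_cancel hm, pow_add, mul_comm (p ^ (α - m))] at this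
    exact Nat.lt_of_mul_lt_mul_left this
  · intro t ht
    simp only [Finset.mem_coe, Finset.mem_range] at ht
    have hlt : t * p ^ m < p ^ α := by
      calc t * p ^ m < p ^ (α - m) * p ^ m := (Nat.mul_lt_mul_right hppos).mpr ht
      _ = p ^ α := by rw [← pow_add, Nat.sub_add_cancel hm]
    simp only [Finset.mem_coe, mem_filter, mem_univ, true_and]
    rw [le_pval_iff hm, ZMod.val_cast_of_lt hlt]
    exact dvd_mul_left _ _
  · intro a ha
    simp only [Finset.mem_coe, mem_filter, mem_univ, true_and] at ha
    rw [le_pval_iff hm] at ha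
    beta_reduce
    rw [Nat.div_mul_cancel ha, ZMod.natCast_val, ZMod.cast_id]
  · intro t ht
    simp only [Finset.mem_coe, Finset.mem_range] at ht
    have hlt : t * p ^ m < p ^ α := by
      calc t * p ^ m < p ^ (α - m) * p ^ m := (Nat.mul_lt_mul_right hppos).mpr ht
      _ = p ^ α := by rw [← pow_add, Nat.sub_add_cancel hm]
    beta_reduce
    rw [ZMod.val_cast_of_lt hlt, Nat.mul_div_cancel t hppos]

end Val

/-! ### Class sums and tail sums -/

open Finset

section Sums
variable (p α : ℕ) [Fact p.Prime] [NeZero (p ^ α)]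

/-- Sum of `f` over the class of elements of valuation `i`. -/
noncomputable def csum (i : ℕ) (f : ZMod (p ^ α) → ℝ) : ℝ :=
  ∑ b ∈ univ.filter (fun b => pval p α b = i), f b

/-- Sum of `f` over the set of elements of valuation at least `m`. -/
noncomputable def hsum (m : ℕ) (f : ZMod (p ^ α) → ℝ) : ℝ :=
  ∑ b ∈ univ.filter (fun b => m ≤ pval p α b), f b

variable {p α}

lemma hsum_eq_sum_csum (m : ℕ) (f : ZMod (p ^ α) → ℝ) :
    hsum p α m f = ∑ i ∈ Finset.Icc m α, csum p α i f := by
  rw [hsum]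
  simp only [csum]
  rw [Finset.sum_fiberwise_eq_sum_filter univ (Finset.Icc m α) (pval p α) f]
  apply Finset.sum_congr _ (fun _ _ => rfl)
  apply Finset.filter_congr
  intro b _
  simp [Finset.mem_Icc, pval_le b]

lemma hsum_of_gt {m : ℕ} (hm : α < m) (f : ZMod (p ^ α) → ℝ) : hsum p α m f = 0 := by
  rw [hsum, Finset.filter_false_of_mem, Finset.sum_empty]
  intro b _
  have := pval_le (p := p) (α := α) b
  omega

lemma csum_of_gt {i : ℕ} (hi : α < i) (f : ZMod (p ^ α) → ℝ) : csum p α i f = 0 := by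
  rw [csum, Finset.filter_false_of_mem, Finset.sum_empty]
  intro b _
  have := pval_le (p := p) (α := α) b
  omega

lemma csum_add_hsum (i : ℕ) (f : ZMod (p ^ α) → ℝ) :
    csum p α i f + hsum p α (i + 1) f = hsum p α i f := by
  rcases le_or_gt i α with hi | hi
  · rw [hsum_eq_sum_csum, hsum_eq_sum_csum]
    have hins : Finset.Icc i α = insert i (Finset.Icc (i + 1) α) := by
      ext j; simp only [Finset.mem_Icc, Finset.mem_insert]; omega
    rw [hins, Finset.sum_insert (by simp)]
  · rw [csum_of_gt hi f, hsum_of_gt hi f, hsum_of_gt (by omega) f, zero_add]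

lemma hsum_eq_zero {f : ZMod (p ^ α) → ℝ} (h : ∀ i, csum p α i f = 0) (m : ℕ) :
    hsum p α m f = 0 := by
  rw [hsum_eq_sum_csum]
  exact Finset.sum_eq_zero fun i _ => h i

lemma csum_eq_of_const {i : ℕ} {f : ZMod (p ^ α) → ℝ} {t : ℝ}
    (h : ∀ b, pval p α b = i → f b = t) :
    csum p α i f = ((univ.filter (fun b => pval p α b = i)).card : ℝ) * t := by
  rw [csum, Finset.sum_congr rfl (fun b hb => h b (by simpa using hb)),
    Finset.sum_const, nsmul_eq_mul]

end Sums

/-! ### The generic space of class-sum-zero functions supported on given classes -/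

section Dim
variable {G : Type*} [Fintype G] [DecidableEq G]
variable (c : G → ℕ) (I : Finset ℕ)

/-- Functions with all class sums zero, supported on the classes in `I`. -/
def Vsp : Submodule ℝ (G → ℝ) where
  carrier := {f | (∀ i : ℕ, ∑ a ∈ univ.filter (fun a => c a = i), f a = 0) ∧
      ∀ a : G, c a ∉ I → f a = 0}
  add_mem' := by
    rintro f g ⟨hf1, hf2⟩ ⟨hg1, hg2⟩
    exact ⟨fun i => by simp [Finset.sum_add_distrib, hf1 i, hg1 i],
      fun a ha => by simp [hf2 a ha, hg2 a ha]⟩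
  zero_mem' := ⟨fun i => by simp, fun a _ => rfl⟩
  smul_mem' := by
    rintro t f ⟨hf1, hf2⟩
    exact ⟨fun i => by simp [← Finset.mul_sum, hf1 i],
      fun a ha => by simp [hf2 a ha]⟩

lemma mem_Vsp_iff (f : G → ℝ) :
    f ∈ Vsp c I ↔ (∀ i : ℕ, ∑ a ∈ univ.filter (fun a => c a = i), f a = 0) ∧
      ∀ a : G, c a ∉ I → f a = 0 := Iff.rfl

theorem finrank_Vsp (r : ℕ → G) (hr : ∀ i ∈ I, c (r i) = i) :
    Module.finrank ℝ (Vsp c I) = (univ.filter (fun a => c a ∈ I)).card - I.card := by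
  classical
  set P : G → Prop := fun a => c a ∈ I ∧ a ≠ r (c a) with hP
  haveI : DecidablePred P := fun a => instDecidableAnd
  set Φ : Vsp c I →ₗ[ℝ] ({a : G // P a} → ℝ) :=
    { toFun := fun f s => f.1 s.1
      map_add' := fun f g => rfl
      map_smul' := fun t f => rfl } with hΦ
  have hinj : Function.Injective Φ := by
    intro f g hfg
    have hz : ∀ s : {a : G // P a}, f.1 s.1 = g.1 s.1 := fun s => congrFun hfg s
    apply Subtype.ext
    funext a
    by_cases h1 : c a ∈ I
    · by_cases h2 : a = r (c a)
      · have key : ∀ (u : G → ℝ), (∀ i : ℕ, ∑ b ∈ univ.filter (fun b => c b = i), u b = 0) →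
            (∀ s : {a : G // P a}, u s.1 = 0) → u a = 0 := by
          intro u hu1 hu2
          have hmem : a ∈ univ.filter (fun b => c b = c a) := by simp
          have := Finset.sum_eq_single_of_mem a hmem (f := u) ?_
          · rw [hu1 (c a)] at this; exact this.symm
          · intro b hb hbne
            simp only [mem_filter, mem_univ, true_and] at hb
            refine hu2 ⟨b, ⟨hb ▸ h1, ?_⟩⟩
            rw [hb, ← h2]; exact hbne
        have h3 := key (f.1 - g.1) (fun i => by
          simp [Finset.sum_sub_distrib, f.2.1 i, g.2.1 i]) (fun s => by
          simp [hz s])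
        simpa [sub_eq_zero] using h3
      · exact hz ⟨a, ⟨h1, h2⟩⟩
    · rw [f.2.2 a h1, g.2.2 a h1]
  have hsurj : Function.Surjective Φ := by
    intro g
    set F : G → ℝ := fun a => if h : P a then g ⟨a, h⟩
      else if c a ∈ I then -∑ s : {a : G // P a}, (if c s.1 = c a then g s else 0) else 0
      with hF
    have hFs : ∀ s : {a : G // P a}, F s.1 = g s := fun s => dif_pos s.2
    have hFmem : F ∈ Vsp c I := by
      constructor
      · intro i
        by_cases hi : i ∈ I
        · have hri : c (r i) = i := hr i hi
          have hmem : r i ∈ univ.filter (fun a => c a = i) := by simp [hri]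
          rw [← Finset.sum_erase_add _ _ hmem]
          have h1 : F (r i) = -∑ s : {a : G // P a}, (if c s.1 = i then g s else 0) := by
            have hnP : ¬ P (r i) := fun h => h.2 (by rw [hri])
            rw [hF]; simp only
            rw [dif_neg hnP, hri, if_pos hi]
          have h2 : ∑ a ∈ (univ.filter (fun a => c a = i)).erase (r i), F a
              = ∑ s : {a : G // P a}, (if c s.1 = i then g s else 0) := by
            have e1 : ∑ s : {a : G // P a}, (if c s.1 = i then g s else 0)
                = ∑ a ∈ univ.filter P, (if c a = i then F a else 0) := by
              rw [Finset.sum_subtype (p := P) (univ.filter P) (fun x => by simp)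
                (fun a => if c a = i then F a else 0)]
              apply Finset.sum_congr rfl
              intro s _
              rw [hFs s]
            have e2 : (univ.filter P).filter (fun a => c a = i)
                = (univ.filter (fun a => c a = i)).erase (r i) := by
              ext a
              simp only [mem_filter, mem_univ, true_and, mem_erase, hP]
              constructor
              · rintro ⟨⟨hI, hne⟩, hci⟩
                refine ⟨?_, hci⟩
                rw [← hci]
                exact hne
              · rintro ⟨hne, hci⟩
                refine ⟨⟨hci ▸ hi, ?_⟩, hci⟩
                rw [hci]
                exact hne
            rw [e1, ← Finset.sum_filter, e2]
          rw [h2, h1, add_neg_cancel]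
        · apply Finset.sum_eq_zero
          intro a ha
          simp only [mem_filter, mem_univ, true_and] at ha
          have hnP : ¬ P a := fun h => hi (ha ▸ h.1)
          rw [hF]; simp only
          rw [dif_neg hnP, if_neg (ha ▸ hi)]
      · intro a ha
        have hnP : ¬ P a := fun h => ha h.1
        rw [hF]; simp only
        rw [dif_neg hnP, if_neg ha]
    exact ⟨⟨F, hFmem⟩, funext fun s => hFs s⟩
  have := (LinearEquiv.ofBijective Φ ⟨hinj, hsurj⟩).finrank_eq
  rw [this, Module.finrank_fintype_fun_eq_card, Fintype.card_subtype]
  have hTR : univ.filter P = (univ.filter (fun a => c a ∈ I)) \ (I.image r) := by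
    ext a
    simp only [mem_filter, mem_univ, true_and, mem_sdiff, mem_image, hP]
    constructor
    · rintro ⟨h1, h2⟩
      refine ⟨h1, ?_⟩
      rintro ⟨i, hi, rfl⟩
      exact h2 (by rw [hr i hi])
    · rintro ⟨h1, h2⟩
      refine ⟨h1, fun hh => h2 ⟨c a, h1, hh.symm⟩⟩
  rw [hTR, Finset.card_sdiff_of_subset, Finset.card_image_of_injOn]
  · intro i hi j hj hij
    rw [← hr i hi, ← hr j hj, hij]
  · intro a ha
    simp only [mem_image] at ha
    obtain ⟨i, hi, rfl⟩ := ha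
    simp [hr i hi, hi]

end Dim
/-! ### The adjacency matrix action -/

lemma annAdjMatrix_mulVec_filter {G : Type*} [AddCommGroup G] [Fintype G] [DecidableEq G]
    [DecidableRel (annGraph G).Adj] (f : G → ℝ) (a : G) :
    (annAdjMatrix G).mulVec f a
      = ∑ b ∈ univ.filter (fun b => (annGraph G).Adj a b), f b := by
  classical
  unfold annAdjMatrix
  rw [SimpleGraph.adjMatrix_mulVec_apply]
  apply Finset.sum_congr _ (fun _ _ => rfl)
  ext b
  simp [SimpleGraph.mem_neighborFinset]

section Main
variable (p k : ℕ) [Fact p.Prime] [NeZero (p ^ (2 * k - 1))]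

lemma mulVec_eq (hk : 1 ≤ k) (f : ZMod (p ^ (2 * k - 1)) → ℝ) (a : ZMod (p ^ (2 * k - 1))) :
    (annAdjMatrix (ZMod (p ^ (2 * k - 1)))).mulVec f a
      = hsum p (2 * k - 1) ((2 * k - 1) - pval p (2 * k - 1) a) f
        - (if k ≤ pval p (2 * k - 1) a then f a else 0) := by
  letI : DecidableRel (annGraph (ZMod (p ^ (2 * k - 1)))).Adj :=
    Classical.decRel (annGraph (ZMod (p ^ (2 * k - 1)))).Adj
  rw [annAdjMatrix_mulVec_filter]
  have hfil : univ.filter (fun b => (annGraph (ZMod (p ^ (2 * k - 1)))).Adj a b)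
      = (univ.filter (fun b : ZMod (p ^ (2 * k - 1)) =>
          (2 * k - 1) - pval p (2 * k - 1) a ≤ pval p (2 * k - 1) b)).erase a := by
    ext b
    simp only [mem_filter, mem_univ, true_and, mem_erase]
    rw [annGraph_adj_iff, mul_eq_zero_iff_pval]
    constructor
    · rintro ⟨hne, hle⟩
      exact ⟨fun hh => hne hh.symm, by omega⟩
    · rintro ⟨hne, hle⟩
      exact ⟨fun hh => hne hh.symm, by omega⟩
  rw [hfil]
  have hiff : a ∈ univ.filter (fun b : ZMod (p ^ (2 * k - 1)) =>
      (2 * k - 1) - pval p (2 * k - 1) a ≤ pval p (2 * k - 1) b) ↔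
      k ≤ pval p (2 * k - 1) a := by
    simp only [mem_filter, mem_univ, true_and]
    omega
  by_cases hmem : k ≤ pval p (2 * k - 1) a
  · rw [Finset.sum_erase_eq_sub (hiff.mpr hmem), if_pos hmem, hsum]
  · rw [Finset.erase_eq_of_notMem (fun hh => hmem (hiff.mp hh)), if_neg hmem, sub_zero, hsum]

lemma ker_iff_V0 (hk : 1 ≤ k) (f : ZMod (p ^ (2 * k - 1)) → ℝ) :
    (annAdjMatrix (ZMod (p ^ (2 * k - 1)))).mulVec f = 0 ↔
      f ∈ Vsp (pval p (2 * k - 1)) (Finset.range k) := by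
  have hVmem : f ∈ Vsp (pval p (2 * k - 1)) (Finset.range k) ↔
      (∀ i : ℕ, csum p (2 * k - 1) i f = 0) ∧
        ∀ a : ZMod (p ^ (2 * k - 1)), k ≤ pval p (2 * k - 1) a → f a = 0 := by
    rw [mem_Vsp_iff]
    constructor
    · rintro ⟨h1, h2⟩
      exact ⟨h1, fun a ha => h2 a (by simp only [Finset.mem_range]; omega)⟩
    · rintro ⟨h1, h2⟩
      exact ⟨h1, fun a ha => h2 a (by simp only [Finset.mem_range] at ha; omega)⟩
  rw [hVmem]
  constructor
  · intro h
    have h' : ∀ a, hsum p (2 * k - 1) ((2 * k - 1) - pval p (2 * k - 1) a) f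
        = (if k ≤ pval p (2 * k - 1) a then f a else 0) := by
      intro a
      have := congrFun h a
      rw [mulVec_eq p k hk f a] at this
      have h0 : (0 : ZMod (p ^ (2 * k - 1)) → ℝ) a = 0 := rfl
      rw [h0] at this
      linarith
    have step1 : ∀ m, k ≤ m → m ≤ 2 * k - 1 → hsum p (2 * k - 1) m f = 0 := by
      intro m h1 h2
      have hv := pval_natCast_pow (p := p) (α := 2 * k - 1) (i := 2 * k - 1 - m) (by omega)
      have := h' (((p ^ (2 * k - 1 - m) : ℕ) : ZMod (p ^ (2 * k - 1))))
      rw [hv, if_neg (by omega), show 2 * k - 1 - (2 * k - 1 - m) = m by omega] at this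
      exact this
    have step2 : ∀ i, k ≤ i → csum p (2 * k - 1) i f = 0 := by
      intro i hi
      rcases le_or_gt i (2 * k - 1) with h2 | h2
      · have hA := csum_add_hsum i f
        have hB := step1 i hi h2
        have hC : hsum p (2 * k - 1) (i + 1) f = 0 := by
          rcases le_or_gt (i + 1) (2 * k - 1) with h3 | h3
          · exact step1 _ (by omega) h3
          · exact hsum_of_gt h3 f
        linarith
      · exact csum_of_gt h2 f
    have step3 : ∀ a, k ≤ pval p (2 * k - 1) a → f a = 0 := by
      intro a ha
      have hle := pval_le a
      have hconst : ∀ b, pval p (2 * k - 1) b = pval p (2 * k - 1) a →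
          f b = hsum p (2 * k - 1) ((2 * k - 1) - pval p (2 * k - 1) a) f := by
        intro b hb
        have := h' b
        rw [hb, if_pos ha] at this
        exact this.symm
      have hcs := csum_eq_of_const hconst
      rw [step2 _ ha] at hcs
      have hcard : ((univ.filter
          (fun b : ZMod (p ^ (2 * k - 1)) => pval p (2 * k - 1) b = pval p (2 * k - 1) a)).card : ℝ)
          ≠ 0 := by
        rw [Nat.cast_ne_zero]
        exact Finset.card_ne_zero_of_mem (a := a) (by simp)
      have ht : hsum p (2 * k - 1) ((2 * k - 1) - pval p (2 * k - 1) a) f = 0 := by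
        rcases mul_eq_zero.mp hcs.symm with hcc | hcc
        · exact absurd hcc hcard
        · exact hcc
      rw [hconst a rfl, ht]
    have step4 : ∀ m, hsum p (2 * k - 1) m f = 0 := by
      intro m
      rcases le_or_gt m (2 * k - 1) with h1 | h1
      · rcases le_or_gt k m with h2 | h2
        · exact step1 m h2 h1
        · have hv := pval_natCast_pow (p := p) (α := 2 * k - 1) (i := 2 * k - 1 - m) (by omega)
          have := h' (((p ^ (2 * k - 1 - m) : ℕ) : ZMod (p ^ (2 * k - 1))))
          rw [hv, if_pos (by omega), show 2 * k - 1 - (2 * k - 1 - m) = m by omega] at this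
          rw [this]
          exact step3 _ (by rw [hv]; omega)
      · exact hsum_of_gt h1 f
    have step5 : ∀ i, csum p (2 * k - 1) i f = 0 := by
      intro i
      have := csum_add_hsum i f
      rw [step4 i, step4 (i + 1)] at this
      linarith
    exact ⟨step5, step3⟩
  · rintro ⟨h1, h2⟩
    funext a
    rw [mulVec_eq p k hk f a, hsum_eq_zero h1]
    have h0 : (0 : ZMod (p ^ (2 * k - 1)) → ℝ) a = 0 := rfl
    rw [h0]
    by_cases hka : k ≤ pval p (2 * k - 1) a
    · rw [if_pos hka, h2 a hka]; ring
    · rw [if_neg hka]; ring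

end Main
section Main2
variable (p k : ℕ) [Fact p.Prime] [NeZero (p ^ (2 * k - 1))]

lemma two_le_card_class (hk : 1 ≤ k) (hpk : ¬(p = 2 ∧ k = 1)) :
    2 ≤ (univ.filter
      (fun b : ZMod (p ^ (2 * k - 1)) => pval p (2 * k - 1) b = k - 1)).card := by
  have hp : p.Prime := Fact.out
  have hsplit := Finset.card_filter_add_card_filter_not
    (s := univ.filter (fun b : ZMod (p ^ (2 * k - 1)) => k - 1 ≤ pval p (2 * k - 1) b))
    (p := fun b => pval p (2 * k - 1) b = k - 1)
  rw [Finset.filter_filter, Finset.filter_filter] at hsplit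
  have e1 : (univ.filter (fun b : ZMod (p ^ (2 * k - 1)) =>
      k - 1 ≤ pval p (2 * k - 1) b ∧ pval p (2 * k - 1) b = k - 1))
      = univ.filter (fun b => pval p (2 * k - 1) b = k - 1) := by
    apply Finset.filter_congr; intro b _; constructor
    · rintro ⟨_, h⟩; exact h
    · intro h; exact ⟨by omega, h⟩
  have e2 : (univ.filter (fun b : ZMod (p ^ (2 * k - 1)) =>
      k - 1 ≤ pval p (2 * k - 1) b ∧ ¬pval p (2 * k - 1) b = k - 1))
      = univ.filter (fun b => k ≤ pval p (2 * k - 1) b) := by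
    apply Finset.filter_congr; intro b _; constructor
    · rintro ⟨h1, h2⟩; omega
    · intro h; omega
  rw [e1, e2, card_le_pval (by omega), card_le_pval (by omega)] at hsplit
  have hq1 : 1 ≤ p ^ (2 * k - 1 - k) := Nat.one_le_pow _ _ hp.pos
  have hkk : 2 * k - 1 - (k - 1) = (2 * k - 1 - k) + 1 := by omega
  rw [hkk, pow_succ] at hsplit
  -- hsplit : card + p ^ (2k-1-k) = p ^ (2k-1-k) * p
  rcases Nat.lt_or_ge p 3 with hp2 | hp3
  · have hpe : p = 2 := by have := hp.two_le; omega
    have hke : 2 ≤ k := by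
      rcases Nat.lt_or_ge k 2 with h | h
      · exact absurd ⟨hpe, by omega⟩ hpk
      · exact h
    have hq2 : 2 ≤ p ^ (2 * k - 1 - k) := by
      calc 2 = p ^ 1 := by rw [hpe, pow_one]
      _ ≤ p ^ (2 * k - 1 - k) := Nat.pow_le_pow_right hp.pos (by omega)
    subst hpe
    omega
  · nlinarith [hsplit, hq1]

lemma negone_iff_V1 (hk : 1 ≤ k) (hpk : ¬(p = 2 ∧ k = 1)) (f : ZMod (p ^ (2 * k - 1)) → ℝ) :
    (annAdjMatrix (ZMod (p ^ (2 * k - 1)))).mulVec f = -f ↔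
      f ∈ Vsp (pval p (2 * k - 1)) (Finset.Icc k (2 * k - 1)) := by
  have hVmem : f ∈ Vsp (pval p (2 * k - 1)) (Finset.Icc k (2 * k - 1)) ↔
      (∀ i : ℕ, csum p (2 * k - 1) i f = 0) ∧
        ∀ a : ZMod (p ^ (2 * k - 1)), pval p (2 * k - 1) a < k → f a = 0 := by
    rw [mem_Vsp_iff]
    constructor
    · rintro ⟨h1, h2⟩
      refine ⟨h1, fun a ha => h2 a ?_⟩
      simp only [Finset.mem_Icc]
      omega
    · rintro ⟨h1, h2⟩
      refine ⟨h1, fun a ha => h2 a ?_⟩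
      simp only [Finset.mem_Icc] at ha
      have := pval_le a
      omega
  rw [hVmem]
  constructor
  · intro h
    have h' : ∀ a, hsum p (2 * k - 1) ((2 * k - 1) - pval p (2 * k - 1) a) f
        - (if k ≤ pval p (2 * k - 1) a then f a else 0) = -f a := by
      intro a
      have := congrFun h a
      rw [mulVec_eq p k hk f a] at this
      exact this
    have hHigh : ∀ a, k ≤ pval p (2 * k - 1) a →
        hsum p (2 * k - 1) ((2 * k - 1) - pval p (2 * k - 1) a) f = 0 := by
      intro a ha
      have := h' a
      rw [if_pos ha] at this
      linarith
    have hLow : ∀ a, pval p (2 * k - 1) a < k →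
        hsum p (2 * k - 1) ((2 * k - 1) - pval p (2 * k - 1) a) f = -f a := by
      intro a ha
      have := h' a
      rw [if_neg (by omega)] at this
      linarith
    have step1 : ∀ m, m < k → hsum p (2 * k - 1) m f = 0 := by
      intro m hm
      have hv := pval_natCast_pow (p := p) (α := 2 * k - 1) (i := 2 * k - 1 - m) (by omega)
      have := hHigh (((p ^ (2 * k - 1 - m) : ℕ) : ZMod (p ^ (2 * k - 1)))) (by rw [hv]; omega)
      rwa [hv, show 2 * k - 1 - (2 * k - 1 - m) = m by omega] at this
    have step2 : ∀ i, i + 2 ≤ k → csum p (2 * k - 1) i f = 0 := by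
      intro i hi
      have hA := csum_add_hsum i f
      have hB := step1 i (by omega)
      have hC := step1 (i + 1) (by omega)
      linarith
    have step3 : ∀ a, pval p (2 * k - 1) a + 2 ≤ k → f a = 0 := by
      intro a ha
      have hconst : ∀ b, pval p (2 * k - 1) b = pval p (2 * k - 1) a →
          f b = -hsum p (2 * k - 1) ((2 * k - 1) - pval p (2 * k - 1) a) f := by
        intro b hb
        have := hLow b (by omega)
        rw [hb] at this
        linarith
      have hcs := csum_eq_of_const hconst
      rw [step2 _ ha] at hcs
      have hcard : ((univ.filter
          (fun b : ZMod (p ^ (2 * k - 1)) => pval p (2 * k - 1) b = pval p (2 * k - 1) a)).card : ℝ)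
          ≠ 0 := by
        rw [Nat.cast_ne_zero]
        exact Finset.card_ne_zero_of_mem (a := a) (by simp)
      have ht : -hsum p (2 * k - 1) ((2 * k - 1) - pval p (2 * k - 1) a) f = 0 := by
        rcases mul_eq_zero.mp hcs.symm with hcc | hcc
        · exact absurd hcc hcard
        · exact hcc
      have := hLow a (by omega)
      linarith
    have step4 : ∀ m, k + 1 ≤ m → hsum p (2 * k - 1) m f = 0 := by
      intro m hm
      rcases le_or_gt m (2 * k - 1) with h1 | h1
      · have hv := pval_natCast_pow (p := p) (α := 2 * k - 1) (i := 2 * k - 1 - m) (by omega)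
        have hlow := hLow (((p ^ (2 * k - 1 - m) : ℕ) : ZMod (p ^ (2 * k - 1)))) (by rw [hv]; omega)
        rw [hv, show 2 * k - 1 - (2 * k - 1 - m) = m by omega] at hlow
        have hz := step3 (((p ^ (2 * k - 1 - m) : ℕ) : ZMod (p ^ (2 * k - 1)))) (by rw [hv]; omega)
        rw [hz] at hlow
        linarith
      · exact hsum_of_gt h1 f
    -- class k-1
    have hak : 2 * k - 1 - (k - 1) = k := by omega
    have hconst : ∀ b, pval p (2 * k - 1) b = k - 1 →
        f b = -hsum p (2 * k - 1) k f := by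
      intro b hb
      have := hLow b (by omega)
      rw [hb, hak] at this
      linarith
    have hcs := csum_eq_of_const hconst
    have hA := csum_add_hsum (k - 1) f
    rw [show k - 1 + 1 = k by omega] at hA
    have hB := step1 (k - 1) (by omega)
    have hcard2 := two_le_card_class p k hk hpk
    have hcard2' : (2 : ℝ) ≤ ((univ.filter
        (fun b : ZMod (p ^ (2 * k - 1)) => pval p (2 * k - 1) b = k - 1)).card : ℝ) := by
      exact_mod_cast hcard2
    have hu : hsum p (2 * k - 1) k f = 0 := by
      set u := hsum p (2 * k - 1) k f with hu
      set n := ((univ.filter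
        (fun b : ZMod (p ^ (2 * k - 1)) => pval p (2 * k - 1) b = k - 1)).card : ℝ) with hn
      -- hcs : csum (k-1) f = n * (-u) ; hA : csum (k-1) f + u = hsum (k-1) f = 0
      have : n * (-u) + u = 0 := by rw [← hcs]; linarith
      have h2 : (n - 1) * u = 0 := by ring_nf; ring_nf at this; linarith
      rcases mul_eq_zero.mp h2 with hcc | hcc
      · linarith
      · exact hcc
    have stepk1 : ∀ a, pval p (2 * k - 1) a = k - 1 → f a = 0 := by
      intro a ha
      rw [hconst a ha, hu, neg_zero]
    have stepLow : ∀ a, pval p (2 * k - 1) a < k → f a = 0 := by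
      intro a ha
      rcases Nat.lt_or_ge (pval p (2 * k - 1) a) (k - 1) with h1 | h1
      · exact step3 a (by omega)
      · exact stepk1 a (by omega)
    have step4' : ∀ m, hsum p (2 * k - 1) m f = 0 := by
      intro m
      rcases Nat.lt_or_ge m k with h1 | h1
      · exact step1 m h1
      · rcases Nat.eq_or_lt_of_le h1 with h2 | h2
        · subst h2; exact hu
        · exact step4 m h2
    have step5 : ∀ i, csum p (2 * k - 1) i f = 0 := by
      intro i
      have := csum_add_hsum i f
      rw [step4' i, step4' (i + 1)] at this
      linarith
    exact ⟨step5, stepLow⟩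
  · rintro ⟨h1, h2⟩
    funext a
    rw [mulVec_eq p k hk f a, hsum_eq_zero h1]
    have h0 : (-f) a = -f a := rfl
    rw [h0]
    by_cases hka : k ≤ pval p (2 * k - 1) a
    · rw [if_pos hka]; ring
    · rw [if_neg hka, h2 a (by omega)]; ring

end Main2
/-- for a prime `p` and `α = 2k - 1` with `k ≥ 1`, `(p, k) ≠ (2, 1)`, the
eigenvalue `0` of the adjacency matrix of `Γ(ℤ/p^αℤ)` has multiplicity
`p^α - p^(k-1) - k`, and the eigenvalue `-1` has multiplicity `p^(k-1) - k`. -/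
theorem annGraph_adj_multiplicities_odd (p k : ℕ) [Fact p.Prime] (hk : 1 ≤ k)
    (hpk : ¬ (p = 2 ∧ k = 1)) :
    Module.finrank ℝ
        (Module.End.eigenspace (Matrix.toLin' (annAdjMatrix (ZMod (p ^ (2 * k - 1))))) 0) =
      p ^ (2 * k - 1) - p ^ (k - 1) - k ∧
    Module.finrank ℝ
        (Module.End.eigenspace (Matrix.toLin' (annAdjMatrix (ZMod (p ^ (2 * k - 1))))) (-1)) =
      p ^ (k - 1) - k := by
  have hp : p.Prime := Fact.out
  haveI : NeZero (p ^ (2 * k - 1)) := ⟨pow_ne_zero _ hp.ne_zero⟩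
  have hcardU : Fintype.card (ZMod (p ^ (2 * k - 1))) = p ^ (2 * k - 1) := ZMod.card _
  constructor
  · have he : Module.End.eigenspace (Matrix.toLin' (annAdjMatrix (ZMod (p ^ (2 * k - 1))))) 0
        = Vsp (pval p (2 * k - 1)) (Finset.range k) := by
      ext f
      rw [Module.End.mem_eigenspace_iff, Matrix.toLin'_apply, zero_smul]
      exact ker_iff_V0 p k hk f
    rw [he, finrank_Vsp _ _ (fun i => ((p ^ i : ℕ) : ZMod (p ^ (2 * k - 1))))
      (fun i hi => pval_natCast_pow (by simp only [Finset.mem_range] at hi; omega))]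
    have hcard : (univ.filter
        (fun a : ZMod (p ^ (2 * k - 1)) => pval p (2 * k - 1) a ∈ Finset.range k)).card
        = p ^ (2 * k - 1) - p ^ (k - 1) := by
      have hsplit := Finset.card_filter_add_card_filter_not
        (s := (univ : Finset (ZMod (p ^ (2 * k - 1)))))
        (p := fun a => k ≤ pval p (2 * k - 1) a)
      have e1 : univ.filter (fun a : ZMod (p ^ (2 * k - 1)) => ¬ k ≤ pval p (2 * k - 1) a)
          = univ.filter (fun a => pval p (2 * k - 1) a ∈ Finset.range k) := by
        apply Finset.filter_congr
        intro a _
        simp only [Finset.mem_range]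
        omega
      rw [e1, card_le_pval (by omega), Finset.card_univ, hcardU,
        show 2 * k - 1 - k = k - 1 by omega] at hsplit
      omega
    rw [hcard, Finset.card_range]
  · have he : Module.End.eigenspace (Matrix.toLin' (annAdjMatrix (ZMod (p ^ (2 * k - 1))))) (-1)
        = Vsp (pval p (2 * k - 1)) (Finset.Icc k (2 * k - 1)) := by
      ext f
      rw [Module.End.mem_eigenspace_iff, Matrix.toLin'_apply, neg_smul, one_smul]
      exact negone_iff_V1 p k hk hpk f
    rw [he, finrank_Vsp _ _ (fun i => ((p ^ i : ℕ) : ZMod (p ^ (2 * k - 1))))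
      (fun i hi => pval_natCast_pow (Finset.mem_Icc.mp hi).2)]
    have hcard : (univ.filter
        (fun a : ZMod (p ^ (2 * k - 1)) => pval p (2 * k - 1) a ∈ Finset.Icc k (2 * k - 1))).card
        = p ^ (k - 1) := by
      have e1 : univ.filter
          (fun a : ZMod (p ^ (2 * k - 1)) => pval p (2 * k - 1) a ∈ Finset.Icc k (2 * k - 1))
          = univ.filter (fun a => k ≤ pval p (2 * k - 1) a) := by
        apply Finset.filter_congr
        intro a _
        have := pval_le a
        simp only [Finset.mem_Icc]
        omega
      rw [e1, card_le_pval (by omega), show 2 * k - 1 - k = k - 1 by omega]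
    rw [hcard, Nat.card_Icc, show 2 * k - 1 + 1 - k = k by omega]
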